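/- Let X, Y be positive definite d×d complex matrices and let R(X) = λ_max(X)/λ_min(X). If (√R(X) − 1)(√R(Y) − 1) < 2, then the Jordan product XY + YX is positive definite. -/

import Mathlib

open Matrix BigOperators
open scoped ComplexOrder

/-- Minimal eigenvalue of a (Hermitian) matrix; junk value 0 otherwise. -/
noncomputable def minEig {d : ℕ} (M : Matrix (Fin d) (Fin d) ℂ) : ℝ :=
  if h : M.IsHermitian then ⨅ j, h.eigenvalues j else 0

/-- Maximal eigenvalue of a (Hermitian) matrix; junk value 0 otherwise. -/
noncomputable def maxEig {d : ℕ} (M : Matrix (Fin d) (Fin d) ℂ) : ℝ :=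
  if h : M.IsHermitian then ⨆ j, h.eigenvalues j else 0

/-- Condition number `R(X) = λ_max(X)/λ_min(X)` of a positive definite matrix. -/
noncomputable def condNum {d : ℕ} (M : Matrix (Fin d) (Fin d) ℂ) : ℝ :=
  maxEig M / minEig M

lemma rclike_ofReal_eq : (RCLike.ofReal : ℝ → ℂ) = Complex.ofReal := rfl

lemma minEig_le {d : ℕ} {X : Matrix (Fin d) (Fin d) ℂ} (hH : X.IsHermitian) (i : Fin d) :
    minEig X ≤ hH.eigenvalues i := by
  rw [minEig, dif_pos hH]
  exact ciInf_le (Set.finite_range _).bddBelow i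

lemma le_maxEig {d : ℕ} {X : Matrix (Fin d) (Fin d) ℂ} (hH : X.IsHermitian) (i : Fin d) :
    hH.eigenvalues i ≤ maxEig X := by
  rw [maxEig, dif_pos hH]
  exact le_ciSup (Set.finite_range _).bddAbove i

lemma minEig_pos {d : ℕ} (hd : 0 < d) {X : Matrix (Fin d) (Fin d) ℂ} (hX : X.PosDef) :
    0 < minEig X := by
  have : Nonempty (Fin d) := ⟨⟨0, hd⟩⟩
  obtain ⟨i0, hi0⟩ := Finite.exists_min hX.1.eigenvalues
  rw [minEig, dif_pos hX.1]
  have h1 : (⨅ j, hX.1.eigenvalues j) = hX.1.eigenvalues i0 :=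
    le_antisymm (ciInf_le (Set.finite_range _).bddBelow i0) (le_ciInf hi0)
  rw [h1]
  exact hX.eigenvalues_pos i0

/-- The key quadratic spectral inequality `⟨Xv, Xv⟩ ≤ (m+M)⟨v,Xv⟩ - mM⟨v,v⟩`. -/
lemma herm_quad {d : ℕ} {X : Matrix (Fin d) (Fin d) ℂ} (hH : X.IsHermitian) {m M : ℝ}
    (hm : ∀ i, m ≤ hH.eigenvalues i) (hM : ∀ i, hH.eigenvalues i ≤ M) (v : Fin d → ℂ) :
    Complex.re (star (X *ᵥ v) ⬝ᵥ (X *ᵥ v)) ≤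
      (m + M) * Complex.re (star v ⬝ᵥ (X *ᵥ v)) - m * M * Complex.re (star v ⬝ᵥ v) := by
  classical
  set U : Matrix (Fin d) (Fin d) ℂ := (hH.eigenvectorUnitary : Matrix (Fin d) (Fin d) ℂ) with hUdef
  set D : Matrix (Fin d) (Fin d) ℂ := diagonal (RCLike.ofReal ∘ hH.eigenvalues) with hDdef
  have hU : U * star U = 1 := mem_unitaryGroup_iff.mp hH.eigenvectorUnitary.2
  have hU' : star U * U = 1 := mem_unitaryGroup_iff'.mp hH.eigenvectorUnitary.2
  have hφmul : ∀ A B : Matrix (Fin d) (Fin d) ℂ,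
      (U * A * star U) * (U * B * star U) = U * (A * B) * star U := by
    intro A B
    simp only [Matrix.mul_assoc]
    rw [← Matrix.mul_assoc (star U) U (B * star U), hU', Matrix.one_mul]
  set f : Fin d → ℂ := fun i => (((hH.eigenvalues i - m) * (M - hH.eigenvalues i) : ℝ) : ℂ) with hfdef
  have hDq : diagonal f = (((m + M : ℝ) : ℂ)) • D - D * D - (((m * M : ℝ) : ℂ)) • 1 := by
    rw [hDdef]
    ext i j
    rw [Matrix.sub_apply, Matrix.sub_apply, Matrix.smul_apply, Matrix.smul_apply,
      Matrix.diagonal_mul_diagonal]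
    by_cases hij : i = j
    · subst hij
      simp only [Matrix.diagonal_apply_eq, Matrix.one_apply_eq, smul_eq_mul, hfdef,
        Function.comp_apply, rclike_ofReal_eq]
      push_cast
      ring
    · simp [Matrix.diagonal_apply_ne _ hij, Matrix.one_apply_ne hij]
  have hQ' : (((m + M : ℝ) : ℂ)) • X - X * X - (((m * M : ℝ) : ℂ)) • (1 : Matrix (Fin d) (Fin d) ℂ)
      = U * diagonal f * star U := by
    rw [hDq, Matrix.mul_sub, Matrix.mul_sub, Matrix.sub_mul, Matrix.sub_mul,
      Matrix.mul_smul, Matrix.smul_mul, Matrix.mul_smul, Matrix.smul_mul,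
      ← hφmul D D, Matrix.mul_one, hU]
    rw [← (show X = U * D * star U from hH.spectral_theorem)]
  have hf : ∀ i, 0 ≤ f i := by
    intro i
    rw [hfdef]
    rw [Complex.zero_le_real]
    exact mul_nonneg (sub_nonneg.mpr (hm i)) (sub_nonneg.mpr (hM i))
  have hQpsd : (((m + M : ℝ) : ℂ) • X - X * X - ((m * M : ℝ) : ℂ) •
      (1 : Matrix (Fin d) (Fin d) ℂ)).PosSemidef := by
    rw [hQ', Matrix.star_eq_conjTranspose U]
    exact (Matrix.posSemidef_diagonal_iff.mpr hf).mul_mul_conjTranspose_same U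
  have h0 := hQpsd.dotProduct_mulVec_nonneg v
  have hswitch : star v ⬝ᵥ (X *ᵥ (X *ᵥ v)) = star (X *ᵥ v) ⬝ᵥ (X *ᵥ v) := by
    rw [dotProduct_mulVec (star v) X, star_mulVec, hH.eq]
  have hexp : star v ⬝ᵥ ((((m + M : ℝ) : ℂ) • X - X * X - ((m * M : ℝ) : ℂ) •
      (1 : Matrix (Fin d) (Fin d) ℂ)) *ᵥ v)
      = ((m + M : ℝ) : ℂ) * (star v ⬝ᵥ (X *ᵥ v)) - star (X *ᵥ v) ⬝ᵥ (X *ᵥ v)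
        - ((m * M : ℝ) : ℂ) * (star v ⬝ᵥ v) := by
    rw [Matrix.sub_mulVec, Matrix.sub_mulVec, Matrix.smul_mulVec,
      Matrix.smul_mulVec, Matrix.one_mulVec, ← Matrix.mulVec_mulVec]
    simp only [dotProduct_sub, dotProduct_smul, smul_eq_mul]
    rw [hswitch]
  rw [hexp] at h0
  have h0re : 0 ≤ Complex.re (((m + M : ℝ) : ℂ) * (star v ⬝ᵥ (X *ᵥ v))
      - star (X *ᵥ v) ⬝ᵥ (X *ᵥ v) - ((m * M : ℝ) : ℂ) * (star v ⬝ᵥ v)) := by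
    have := (Complex.le_def.mp h0).1
    simpa using this
  simp only [Complex.sub_re, Complex.re_ofReal_mul] at h0re
  linarith

set_option maxHeartbeats 1000000 in
/-- Abstract inner-product-space estimate. -/
lemma key_inner {E : Type*} [NormedAddCommGroup E] [InnerProductSpace ℂ E]
    (v a b : E) (mx Mx my My α β : ℝ)
    (hmx : 0 < mx) (hxM : mx ≤ Mx) (hmy : 0 < my) (hyM : my ≤ My)
    (hα : (inner ℂ v a : ℂ) = (α : ℂ)) (hβ : (inner ℂ v b : ℂ) = (β : ℂ))
    (hαpos : 0 < α) (hβpos : 0 < β)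
    (ha : ‖a‖ ^ 2 ≤ (mx + Mx) * α - mx * Mx * ‖v‖ ^ 2)
    (hb : ‖b‖ ^ 2 ≤ (my + My) * β - my * My * ‖v‖ ^ 2)
    (hnum : (Real.sqrt (Mx / mx) - 1) * (Real.sqrt (My / my) - 1) < 2) :
    0 < Complex.re (inner ℂ a b : ℂ) := by
  have hv : v ≠ 0 := by
    rintro rfl
    rw [inner_zero_left] at hα
    rw [← Complex.ofReal_zero] at hα
    exact absurd (Complex.ofReal_injective hα.symm) (ne_of_gt hαpos)
  set n : ℝ := ‖v‖ ^ 2 with hndef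
  have hn : 0 < n := pow_pos (norm_pos_iff.mpr hv) 2
  set ax : ℝ := Real.sqrt (Mx / mx) with haxdef
  set ay : ℝ := Real.sqrt (My / my) with haydef
  have hax1 : 1 ≤ ax := by
    rw [haxdef, show (1:ℝ) = Real.sqrt 1 by simp]
    exact Real.sqrt_le_sqrt ((le_div_iff₀ hmx).mpr (by linarith))
  have hay1 : 1 ≤ ay := by
    rw [haydef, show (1:ℝ) = Real.sqrt 1 by simp]
    exact Real.sqrt_le_sqrt ((le_div_iff₀ hmy).mpr (by linarith))
  have hax0 : 0 < ax := lt_of_lt_of_le one_pos hax1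
  have hay0 : 0 < ay := lt_of_lt_of_le one_pos hay1
  have haxsq : ax ^ 2 = Mx / mx := Real.sq_sqrt (div_nonneg (by linarith) hmx.le)
  have haysq : ay ^ 2 = My / my := Real.sq_sqrt (div_nonneg (by linarith) hmy.le)
  have hMx : Mx = ax ^ 2 * mx := by
    field_simp at haxsq
    linarith
  have hMy : My = ay ^ 2 * my := by
    field_simp at haysq
    linarith
  set tx : ℝ := (ax ^ 2 - 1) / (2 * ax) with htxdef
  set ty : ℝ := (ay ^ 2 - 1) / (2 * ay) with htydef
  have htx0 : 0 ≤ tx := div_nonneg (by linarith only [sq_nonneg (ax - 1), hax1]) (by positivity)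
  have hty0 : 0 ≤ ty := div_nonneg (by linarith only [sq_nonneg (ay - 1), hay1]) (by positivity)
  have htxy : tx * ty < 1 := by
    rw [htxdef, htydef, div_mul_div_comm, div_lt_one (by positivity)]
    have h1 : 0 < 2 - (ax - 1) * (ay - 1) := by linarith only [hnum]
    have h2 : 0 < 2 * (ax + ay) - 2 + (ax - 1) * (ay - 1) := by
      linarith only [mul_nonneg (by linarith only [hax1] : (0:ℝ) ≤ ax - 1)
        (by linarith only [hay1] : (0:ℝ) ≤ ay - 1), hax1, hay1]
    linarith only [mul_pos h1 h2]
  set p : E := (n : ℂ) • a - (α : ℂ) • v with hpdef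
  set q : E := (n : ℂ) • b - (β : ℂ) • v with hqdef
  have hav : (inner ℂ a v : ℂ) = (α : ℂ) := by
    rw [← inner_conj_symm, hα, Complex.conj_ofReal]
  have hbv : (inner ℂ b v : ℂ) = (β : ℂ) := by
    rw [← inner_conj_symm, hβ, Complex.conj_ofReal]
  have hvv : (inner ℂ v v : ℂ) = (n : ℂ) := by
    rw [inner_self_eq_norm_sq_to_K, hndef]
    norm_cast
  have haa : (inner ℂ a a : ℂ) = ((‖a‖ ^ 2 : ℝ) : ℂ) := by
    rw [inner_self_eq_norm_sq_to_K]
    norm_cast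
  have hbb : (inner ℂ b b : ℂ) = ((‖b‖ ^ 2 : ℝ) : ℂ) := by
    rw [inner_self_eq_norm_sq_to_K]
    norm_cast
  have hpp : (inner ℂ p p : ℂ) = ((n ^ 2 * ‖a‖ ^ 2 - n * α ^ 2 : ℝ) : ℂ) := by
    rw [hpdef]
    simp only [inner_sub_left, inner_sub_right, inner_smul_left, inner_smul_right,
      Complex.conj_ofReal, hα, hav, hvv, haa]
    push_cast
    ring
  have hqq : (inner ℂ q q : ℂ) = ((n ^ 2 * ‖b‖ ^ 2 - n * β ^ 2 : ℝ) : ℂ) := by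
    rw [hqdef]
    simp only [inner_sub_left, inner_sub_right, inner_smul_left, inner_smul_right,
      Complex.conj_ofReal, hβ, hbv, hvv, hbb]
    push_cast
    ring
  have hp2 : ‖p‖ ^ 2 = n ^ 2 * ‖a‖ ^ 2 - n * α ^ 2 := by
    have h0 : ‖p‖ ^ 2 = Complex.re (inner ℂ p p : ℂ) := norm_sq_eq_re_inner (𝕜 := ℂ) p
    rw [h0, hpp, Complex.ofReal_re]
  have hq2 : ‖q‖ ^ 2 = n ^ 2 * ‖b‖ ^ 2 - n * β ^ 2 := by
    have h0 : ‖q‖ ^ 2 = Complex.re (inner ℂ q q : ℂ) := norm_sq_eq_re_inner (𝕜 := ℂ) q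
    rw [h0, hqq, Complex.ofReal_re]
  -- Kantorovich-type bound on ‖p‖, ‖q‖
  rw [hMx] at ha
  rw [hMy] at hb
  have hpb : ‖p‖ ^ 2 ≤ tx ^ 2 * α ^ 2 * n := by
    rw [hp2, htxdef, div_pow, div_mul_eq_mul_div, div_mul_eq_mul_div,
      le_div_iff₀ (by positivity : (0:ℝ) < (2 * ax) ^ 2)]
    have hC : 4 * ax ^ 2 * (n * (1 + ax ^ 2) * mx * α - ax ^ 2 * mx ^ 2 * n ^ 2 - α ^ 2)
        ≤ (ax ^ 2 - 1) ^ 2 * α ^ 2 := by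
      linarith only [sq_nonneg ((ax ^ 2 + 1) * α - 2 * ax ^ 2 * mx * n)]
    have h1 := mul_le_mul_of_nonneg_left ha (by positivity : (0:ℝ) ≤ 4 * ax ^ 2 * n ^ 2)
    have h2 := mul_le_mul_of_nonneg_left hC hn.le
    linarith only [h1, h2]
  have hqb : ‖q‖ ^ 2 ≤ ty ^ 2 * β ^ 2 * n := by
    rw [hq2, htydef, div_pow, div_mul_eq_mul_div, div_mul_eq_mul_div,
      le_div_iff₀ (by positivity : (0:ℝ) < (2 * ay) ^ 2)]
    have hC : 4 * ay ^ 2 * (n * (1 + ay ^ 2) * my * β - ay ^ 2 * my ^ 2 * n ^ 2 - β ^ 2)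
        ≤ (ay ^ 2 - 1) ^ 2 * β ^ 2 := by
      linarith only [sq_nonneg ((ay ^ 2 + 1) * β - 2 * ay ^ 2 * my * n)]
    have h1 := mul_le_mul_of_nonneg_left hb (by positivity : (0:ℝ) ≤ 4 * ay ^ 2 * n ^ 2)
    have h2 := mul_le_mul_of_nonneg_left hC hn.le
    linarith only [h1, h2]
  have hpnorm : ‖p‖ ≤ tx * α * Real.sqrt n := by
    have h1 : ‖p‖ = Real.sqrt (‖p‖ ^ 2) := (Real.sqrt_sq (norm_nonneg p)).symm
    have h2 : tx * α * Real.sqrt n = Real.sqrt (tx ^ 2 * α ^ 2 * n) := by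
      rw [show tx ^ 2 * α ^ 2 * n = (tx * α) ^ 2 * n by ring, Real.sqrt_mul (by positivity),
        Real.sqrt_sq (mul_nonneg htx0 hαpos.le)]
    rw [h1, h2]
    exact Real.sqrt_le_sqrt hpb
  have hqnorm : ‖q‖ ≤ ty * β * Real.sqrt n := by
    have h1 : ‖q‖ = Real.sqrt (‖q‖ ^ 2) := (Real.sqrt_sq (norm_nonneg q)).symm
    have h2 : ty * β * Real.sqrt n = Real.sqrt (ty ^ 2 * β ^ 2 * n) := by
      rw [show ty ^ 2 * β ^ 2 * n = (ty * β) ^ 2 * n by ring, Real.sqrt_mul (by positivity),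
        Real.sqrt_sq (mul_nonneg hty0 hβpos.le)]
    rw [h1, h2]
    exact Real.sqrt_le_sqrt hqb
  have hprod : ‖p‖ * ‖q‖ ≤ tx * ty * α * β * n := by
    have := mul_le_mul hpnorm hqnorm (norm_nonneg q) (by positivity)
    calc ‖p‖ * ‖q‖ ≤ (tx * α * Real.sqrt n) * (ty * β * Real.sqrt n) := this
      _ = tx * ty * α * β * (Real.sqrt n * Real.sqrt n) := by ring
      _ = tx * ty * α * β * n := by rw [Real.mul_self_sqrt hn.le]
  -- relate inner a b to inner p q
  have hpq : ((n ^ 2 : ℝ) : ℂ) * (inner ℂ a b : ℂ) = (inner ℂ p q : ℂ) + ((n * α * β : ℝ) : ℂ) := by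
    rw [hpdef, hqdef]
    simp only [inner_sub_left, inner_sub_right, inner_smul_left, inner_smul_right,
      Complex.conj_ofReal, hβ, hav, hvv]
    push_cast
    ring
  have hre : n ^ 2 * Complex.re (inner ℂ a b : ℂ) = Complex.re (inner ℂ p q : ℂ) + n * α * β := by
    have := congrArg Complex.re hpq
    rwa [Complex.re_ofReal_mul, Complex.add_re, Complex.ofReal_re] at this
  have hcs : -(‖p‖ * ‖q‖) ≤ Complex.re (inner ℂ p q : ℂ) := by
    have h1 : |(inner ℂ p q : ℂ).re| ≤ ‖p‖ * ‖q‖ := by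
      refine le_trans (Complex.abs_re_le_norm _) ?_
      exact norm_inner_le_norm p q
    linarith [(abs_le.mp h1).1]
  have hfinal : 0 < n ^ 2 * Complex.re (inner ℂ a b : ℂ) := by
    rw [hre]
    have hstrict : tx * ty * α * β * n < α * β * n := by
      have h := mul_lt_of_lt_one_left
        (show (0:ℝ) < α * β * n by positivity) htxy
      linarith only [h]
    linarith only [hcs, hprod, hstrict]
  rcases mul_pos_iff.mp hfinal with ⟨_, hgood⟩ | ⟨hbad, _⟩
  · exact hgood
  · exact absurd hbad (not_lt.mpr (sq_nonneg n))

theorem jordan_product_posDef {d : ℕ} (hd : 0 < d)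
    (X Y : Matrix (Fin d) (Fin d) ℂ) (hX : X.PosDef) (hY : Y.PosDef)
    (h : (Real.sqrt (condNum X) - 1) * (Real.sqrt (condNum Y) - 1) < 2) :
    (X * Y + Y * X).PosDef := by
  have i0 : Fin d := ⟨0, hd⟩
  refine Matrix.PosDef.of_dotProduct_mulVec_pos ?_ (fun v hv => ?_)
  · show (X * Y + Y * X)ᴴ = X * Y + Y * X
    rw [conjTranspose_add, conjTranspose_mul, conjTranspose_mul, hX.1.eq, hY.1.eq, add_comm]
  · -- real-ness of the quadratic forms
    have hrealX : star v ⬝ᵥ (X *ᵥ v) = ((star v ⬝ᵥ (X *ᵥ v)).re : ℂ) := by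
      have h2 : star (star v ⬝ᵥ (X *ᵥ v)) = star v ⬝ᵥ (X *ᵥ v) := by
        calc star (star v ⬝ᵥ (X *ᵥ v)) = star (X *ᵥ v) ⬝ᵥ v := (star_dotProduct _ _).symm
          _ = (star v ᵥ* Xᴴ) ⬝ᵥ v := by rw [star_mulVec]
          _ = (star v ᵥ* X) ⬝ᵥ v := by rw [hX.1.eq]
          _ = star v ⬝ᵥ (X *ᵥ v) := (dotProduct_mulVec _ _ _).symm
      exact (Complex.conj_eq_iff_re.mp h2).symm
    have hrealY : star v ⬝ᵥ (Y *ᵥ v) = ((star v ⬝ᵥ (Y *ᵥ v)).re : ℂ) := by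
      have h2 : star (star v ⬝ᵥ (Y *ᵥ v)) = star v ⬝ᵥ (Y *ᵥ v) := by
        calc star (star v ⬝ᵥ (Y *ᵥ v)) = star (Y *ᵥ v) ⬝ᵥ v := (star_dotProduct _ _).symm
          _ = (star v ᵥ* Yᴴ) ⬝ᵥ v := by rw [star_mulVec]
          _ = (star v ᵥ* Y) ⬝ᵥ v := by rw [hY.1.eq]
          _ = star v ⬝ᵥ (Y *ᵥ v) := (dotProduct_mulVec _ _ _).symm
      exact (Complex.conj_eq_iff_re.mp h2).symm
    have hαpos : 0 < (star v ⬝ᵥ (X *ᵥ v)).re := by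
        have := (Complex.lt_def.mp (hX.dotProduct_mulVec_pos hv)).1; exact this
    have hβpos : 0 < (star v ⬝ᵥ (Y *ᵥ v)).re := by
        have := (Complex.lt_def.mp (hY.dotProduct_mulVec_pos hv)).1; exact this
    -- Euclidean space vectors
    set vv : EuclideanSpace ℂ (Fin d) := (WithLp.equiv 2 (Fin d → ℂ)).symm v with hvvdef
    set va : EuclideanSpace ℂ (Fin d) := (WithLp.equiv 2 (Fin d → ℂ)).symm (X *ᵥ v) with hvadef
    set vb : EuclideanSpace ℂ (Fin d) := (WithLp.equiv 2 (Fin d → ℂ)).symm (Y *ᵥ v) with hvbdef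
    have hia : (inner ℂ vv va : ℂ) = star v ⬝ᵥ (X *ᵥ v) :=
      dotProduct_comm (X *ᵥ v) (star v)
    have hib : (inner ℂ vv vb : ℂ) = star v ⬝ᵥ (Y *ᵥ v) :=
      dotProduct_comm (Y *ᵥ v) (star v)
    have hna : ‖va‖ ^ 2 = (star (X *ᵥ v) ⬝ᵥ (X *ᵥ v)).re := by
      have h1 : ‖va‖ ^ 2 = Complex.re (inner ℂ va va : ℂ) := norm_sq_eq_re_inner (𝕜 := ℂ) va
      rw [h1]; exact congrArg Complex.re (dotProduct_comm _ _)
    have hnb : ‖vb‖ ^ 2 = (star (Y *ᵥ v) ⬝ᵥ (Y *ᵥ v)).re := by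
      have h1 : ‖vb‖ ^ 2 = Complex.re (inner ℂ vb vb : ℂ) := norm_sq_eq_re_inner (𝕜 := ℂ) vb
      rw [h1]; exact congrArg Complex.re (dotProduct_comm _ _)
    have hnv : ‖vv‖ ^ 2 = (star v ⬝ᵥ v).re := by
      have h1 : ‖vv‖ ^ 2 = Complex.re (inner ℂ vv vv : ℂ) := norm_sq_eq_re_inner (𝕜 := ℂ) vv
      rw [h1]; exact congrArg Complex.re (dotProduct_comm _ _)
    -- the spectral bounds
    have hmain : 0 < Complex.re (inner ℂ va vb : ℂ) := by
      refine key_inner vv va vb (minEig X) (maxEig X) (minEig Y) (maxEig Y)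
        (star v ⬝ᵥ (X *ᵥ v)).re (star v ⬝ᵥ (Y *ᵥ v)).re
        (minEig_pos hd hX) ((minEig_le hX.1 i0).trans (le_maxEig hX.1 i0))
        (minEig_pos hd hY) ((minEig_le hY.1 i0).trans (le_maxEig hY.1 i0))
        (by rw [hia, ← hrealX]) (by rw [hib, ← hrealY]) hαpos hβpos ?_ ?_ h
      · rw [hna, hnv]
        exact herm_quad hX.1 (minEig_le hX.1) (le_maxEig hX.1) v
      · rw [hnb, hnv]
        exact herm_quad hY.1 (minEig_le hY.1) (le_maxEig hY.1) v
    rw [show inner ℂ va vb = star (X *ᵥ v) ⬝ᵥ (Y *ᵥ v) from dotProduct_comm (Y *ᵥ v) (star (X *ᵥ v))] at hmain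
    -- expand the Jordan product quadratic form
    have hexp : star v ⬝ᵥ ((X * Y + Y * X) *ᵥ v)
        = (star (X *ᵥ v) ⬝ᵥ (Y *ᵥ v)) + star (star (X *ᵥ v) ⬝ᵥ (Y *ᵥ v)) := by
      rw [Matrix.add_mulVec, dotProduct_add, ← Matrix.mulVec_mulVec, ← Matrix.mulVec_mulVec]
      congr 1
      · rw [dotProduct_mulVec]
        conv_rhs => rw [star_mulVec, hX.1.eq]
      · rw [dotProduct_mulVec]
        conv_rhs => rw [← star_dotProduct, star_mulVec, hY.1.eq]
    rw [hexp, Complex.lt_def]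
    constructor
    · simpa using by linarith [hmain]
    · simp
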